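/- Let p be a prime, w* > 0 a real number, u a natural number, and r* > 0 a rational number of the form b₀*/(q₀*−1) where q₀* = p^{N₀*} with N₀* ≥ 2 and gcd(b₀*, p(q₀*−1)) = 1. Define A[u] as the set of rationals a₁p^{−n₁} + ⋯ + a_u p^{−n_u} with 0 = n₁ ≤ ⋯ ≤ n_u integers and each a_i an integer in [0, w*), and B[u] as the set of rationals r*(b₁p^{−m₁} + ⋯ + b_u p^{−m_u}) with 0 = m₁ ≤ ⋯ ≤ m_u integers, b_i nonnegative integers, b₁ ≠ 0, and b₁ + ⋯ + b_u < p. Then A[u] ∩ B[u] = ∅. -/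

import Mathlib

/-- The set `A[u]` of rationals (viewed in `ℝ`): sums `a₁p^{-n₁} + ⋯ + a_u p^{-n_u}`
with `0 = n₁ ≤ ⋯ ≤ n_u` integers and each `a_i` an integer in `[0, w)`. -/
def Aset (p u : ℕ) (w : ℝ) : Set ℝ :=
  {x | ∃ (n : Fin u → ℕ) (a : Fin u → ℤ),
    Monotone n ∧ (∀ h : 0 < u, n ⟨0, h⟩ = 0) ∧
    (∀ i, 0 ≤ a i ∧ (a i : ℝ) < w) ∧
    x = ∑ i, (a i : ℝ) * (p : ℝ) ^ (-(n i : ℤ))}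

/-- The set `B[u]`: sums `r(b₁p^{-m₁} + ⋯ + b_u p^{-m_u})` with `0 = m₁ ≤ ⋯ ≤ m_u`,
`b_i` nonnegative integers, `b₁ ≠ 0`, and `b₁ + ⋯ + b_u < p`. -/
def Bset (p u : ℕ) (r : ℝ) : Set ℝ :=
  {x | ∃ (hu : 0 < u) (m b : Fin u → ℕ),
    Monotone m ∧ m ⟨0, hu⟩ = 0 ∧ b ⟨0, hu⟩ ≠ 0 ∧
    (∑ i, b i) < p ∧
    x = r * ∑ i, (b i : ℝ) * (p : ℝ) ^ (-(m i : ℤ))}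

/-- `A[u] ∩ B[u] = ∅` when `r* = b₀*/(q₀*-1)`, `q₀* = p^{N₀*}`, `N₀* ≥ 2`,
`gcd(b₀*, p(q₀*-1)) = 1`. -/
theorem stmt1 (p : ℕ) (hp : p.Prime) (w : ℝ) (hw : 0 < w)
    (u N₀ b₀ q₀ : ℕ) (hN₀ : 2 ≤ N₀) (hq₀ : q₀ = p ^ N₀)
    (hb₀ : Nat.gcd b₀ (p * (q₀ - 1)) = 1)
    (r : ℝ) (hr : r = (b₀ : ℝ) / ((q₀ : ℝ) - 1)) :
    Aset p u w ∩ Bset p u r = ∅ := by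
  rw [Set.eq_empty_iff_forall_notMem]
  rintro x ⟨⟨n, a, hmn, hn0, ha, hxA⟩, hu, m, b, hmm, hm0, hb1, hbsum, hxB⟩
  have hp1 : 1 < p := hp.one_lt
  have hpR : (0:ℝ) < (p:ℝ) := by exact_mod_cast Nat.lt_of_lt_of_le Nat.zero_lt_one hp1.le
  have hpN : (p:ℝ) ≠ 0 := ne_of_gt hpR
  have hX2 : 2 ≤ p ^ (N₀ - 1) := by
    calc 2 ≤ p := hp1
    _ = p ^ 1 := (pow_one p).symm
    _ ≤ p ^ (N₀ - 1) := Nat.pow_le_pow_right (by omega) (by omega)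
  have hqX : q₀ = p * p ^ (N₀ - 1) := by
    rw [hq₀, ← pow_succ']
    congr 1
    omega
  have hq4 : 4 ≤ q₀ := by nlinarith
  set q1 : ℕ := q₀ - 1 with hq1def
  have hq1pos : 0 < q1 := by omega
  -- indices
  set il : Fin u := ⟨u - 1, by omega⟩ with hil
  have hle : ∀ i : Fin u, i ≤ il := by
    intro i
    rw [Fin.le_def]
    have := i.isLt
    simp only [hil]
    omega
  set K : ℕ := n il + m il with hK
  have hKn : ∀ i, n i ≤ K := fun i => le_trans (hmn (hle i)) (Nat.le_add_right _ _)
  have hKm : ∀ i, m i ≤ K := fun i => le_trans (hmm (hle i)) (Nat.le_add_left _ _)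
  -- integer/natural sums
  set SA : ℤ := ∑ i, a i * (p:ℤ) ^ (K - n i) with hSAdef
  set T : ℕ := ∑ i, b i * p ^ (K - m i) with hTdef
  have hzp : ∀ (e : ℕ), e ≤ K → ((p ^ (K - e) : ℕ) : ℝ) = (p:ℝ) ^ (-(e:ℤ)) * (p:ℝ) ^ K := by
    intro e he
    have h1 : ((p ^ (K - e) : ℕ) : ℝ) = (p:ℝ) ^ ((K - e : ℕ) : ℤ) := by
      push_cast
      rw [zpow_natCast]
    rw [h1]
    have h2 : ((K - e : ℕ) : ℤ) = -(e:ℤ) + (K:ℤ) := by omega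
    rw [h2, zpow_add₀ hpN, zpow_natCast]
  have hSA : (SA : ℝ) = x * (p:ℝ) ^ K := by
    rw [hxA, Finset.sum_mul, hSAdef]
    push_cast
    refine Finset.sum_congr rfl fun i _ => ?_
    have := hzp (n i) (hKn i)
    push_cast at this
    rw [mul_assoc, ← this]
  have hT : (T : ℝ) = (∑ i, (b i : ℝ) * (p : ℝ) ^ (-(m i : ℤ))) * (p:ℝ) ^ K := by
    rw [Finset.sum_mul, hTdef]
    push_cast
    refine Finset.sum_congr rfl fun i _ => ?_
    have := hzp (m i) (hKm i)
    push_cast at this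
    rw [mul_assoc, ← this]
  have hq1R : ((q1 : ℕ) : ℝ) = (q₀ : ℝ) - 1 := by
    have : (1:ℕ) ≤ q₀ := by omega
    push_cast [hq1def, Nat.cast_sub this]
    ring
  have hq1Rne : ((q1 : ℕ) : ℝ) ≠ 0 := by
    rw [hq1R]
    have : (4:ℝ) ≤ (q₀:ℝ) := by exact_mod_cast hq4
    linarith
  -- key real identity
  have keyR : ((q1 : ℕ) : ℝ) * (SA : ℝ) = (b₀ : ℝ) * (T : ℝ) := by
    rw [hSA, hT, hxB, hr, hq1R]
    have hne : (q₀ : ℝ) - 1 ≠ 0 := by rw [← hq1R]; exact hq1Rne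
    field_simp
  have keyZ : ((q1 : ℕ) : ℤ) * SA = (b₀ : ℤ) * (T : ℤ) := by
    exact_mod_cast keyR
  have hdvdZ : ((q1 : ℕ) : ℤ) ∣ (b₀ : ℤ) * (T : ℤ) := ⟨SA, keyZ.symm⟩
  have hdvdN : q1 ∣ b₀ * T := by exact_mod_cast hdvdZ
  have hcop : Nat.Coprime q1 b₀ :=
    ((Nat.coprime_mul_iff_right.mp hb₀).2).symm
  have hdvdT : q1 ∣ T := hcop.dvd_of_dvd_mul_left hdvdN
  -- modular reduction
  have hmodp : ∀ e : ℕ, p ^ e ≡ p ^ (e % N₀) [MOD q1] := by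
    intro e
    conv_lhs => rw [← Nat.div_add_mod e N₀]
    rw [pow_add, pow_mul]
    have h1 : p ^ N₀ ≡ 1 [MOD q1] := by
      rw [← hq₀]
      exact ((Nat.modEq_iff_dvd' (by omega)).mpr dvd_rfl).symm
    calc (p ^ N₀) ^ (e / N₀) * p ^ (e % N₀)
        ≡ 1 ^ (e / N₀) * p ^ (e % N₀) [MOD q1] := ((h1.pow _).mul_right _)
      _ = p ^ (e % N₀) := by rw [one_pow, one_mul]
  set V : ℕ := ∑ i, b i * p ^ ((K - m i) % N₀) with hVdef
  have hTV : T ≡ V [MOD q1] := by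
    unfold Nat.ModEq
    rw [hTdef, hVdef, Finset.sum_nat_mod,
      Finset.sum_nat_mod Finset.univ q1 (fun i => b i * p ^ ((K - m i) % N₀))]
    congr 1
    exact Finset.sum_congr rfl fun i _ => (hmodp (K - m i)).mul_left (b i)
  have hdvdV : q1 ∣ V := (Nat.modEq_zero_iff_dvd).mp ((hTV.symm.trans ((Nat.modEq_zero_iff_dvd).mpr hdvdT)))
  -- bounds on V
  have hVpos : 1 ≤ V := by
    have hb0 : 1 ≤ b ⟨0, hu⟩ := Nat.one_le_iff_ne_zero.mpr hb1
    have hterm : 1 ≤ b ⟨0, hu⟩ * p ^ ((K - m ⟨0, hu⟩) % N₀) :=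
      Nat.one_le_iff_ne_zero.mpr (by positivity)
    calc 1 ≤ b ⟨0, hu⟩ * p ^ ((K - m ⟨0, hu⟩) % N₀) := hterm
      _ ≤ V := Finset.single_le_sum (f := fun i => b i * p ^ ((K - m i) % N₀))
          (fun i _ => Nat.zero_le _) (Finset.mem_univ (⟨0, hu⟩ : Fin u))
  have hVle : V ≤ (p - 1) * p ^ (N₀ - 1) := by
    calc V ≤ ∑ i, b i * p ^ (N₀ - 1) := by
          refine Finset.sum_le_sum fun i _ => ?_
          exact Nat.mul_le_mul_left _ (Nat.pow_le_pow_right (by omega)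
            (by have := Nat.mod_lt (K - m i) (show 0 < N₀ by omega); omega))
      _ = (∑ i, b i) * p ^ (N₀ - 1) := by rw [Finset.sum_mul]
      _ ≤ (p - 1) * p ^ (N₀ - 1) := Nat.mul_le_mul_right _ (by omega)
  have hsplit : (p - 1) * p ^ (N₀ - 1) + p ^ (N₀ - 1) = q₀ := by
    rw [hqX]
    have : p - 1 + 1 = p := by omega
    nlinarith [this]
  have hVlt : V < q1 := by omega
  exact absurd (Nat.le_of_dvd (by omega) hdvdV) (by omega)
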